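/- There exists a constant C > 0 depending only on K₀, σ_L, σ_U such that for all measurable functions b, b₀ : [0,1] → ℝ with |b(x)| ≤ K₀ and |b₀(x)| ≤ K₀ for all x ∈ [0,1], the invariant densities satisfy the pointwise bound |π_b(x) − π_{b₀}(x)| ≤ C ‖b − b₀‖₂ for every x ∈ [0,1], and consequently the L² bound ‖π_b − π_{b₀}‖₂ ≤ C ‖b − b₀‖₂. -/

import Mathlib

open MeasureTheory Real

/-- `I_b(x) = ∫₀ˣ 2 b(y) / σ(y)² dy`. -/
noncomputable def Ib (σ b : ℝ → ℝ) (x : ℝ) : ℝ :=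
  ∫ y in (0:ℝ)..x, 2 * b y / (σ y) ^ 2

/-- The normalising constant `H_b`. -/
noncomputable def Hb (σ b : ℝ → ℝ) : ℝ :=
  ∫ x in (0:ℝ)..1, (Real.exp (Ib σ b x) / (σ x) ^ 2) *
    (Real.exp (Ib σ b 1) * (∫ y in x..(1:ℝ), Real.exp (-(Ib σ b y))) +
      ∫ y in (0:ℝ)..x, Real.exp (-(Ib σ b y)))

/-- The invariant density `π_b`. -/
noncomputable def πb (σ b : ℝ → ℝ) (x : ℝ) : ℝ :=
  (Real.exp (Ib σ b x) / (Hb σ b * (σ x) ^ 2)) *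
    (Real.exp (Ib σ b 1) * (∫ y in x..(1:ℝ), Real.exp (-(Ib σ b y))) +
      ∫ y in (0:ℝ)..x, Real.exp (-(Ib σ b y)))

/-- The `L²([0,1])`-norm of a function. -/
noncomputable def L2norm (f : ℝ → ℝ) : ℝ :=
  Real.sqrt (∫ x in (0:ℝ)..1, f x ^ 2)

/-! ### Auxiliary definitions -/

noncomputable def Gf (σ c : ℝ → ℝ) (x : ℝ) : ℝ :=
  Real.exp (Ib σ c 1) * (∫ y in x..(1:ℝ), Real.exp (-(Ib σ c y))) +
    ∫ y in (0:ℝ)..x, Real.exp (-(Ib σ c y))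

noncomputable def Ff (σ c : ℝ → ℝ) (x : ℝ) : ℝ :=
  Real.exp (Ib σ c x) / σ x ^ 2 * Gf σ c x

lemma Hb_eq (σ c : ℝ → ℝ) : Hb σ c = ∫ x in (0:ℝ)..1, Ff σ c x := rfl

lemma pi_eq (σ c : ℝ → ℝ) (x : ℝ) : πb σ c x = Ff σ c x / Hb σ c := by
  rw [πb, Ff, Gf]; ring

/-! ### General helper lemmas -/

lemma exp_lip {s t m : ℝ} (hs : |s| ≤ m) (ht : |t| ≤ m) :
    |Real.exp s - Real.exp t| ≤ Real.exp m * |s - t| := by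
  wlog h : t ≤ s generalizing s t
  · rw [abs_sub_comm, abs_sub_comm s t]; exact this ht hs (le_of_not_ge h)
  have hsm : s ≤ m := le_trans (le_abs_self s) hs
  have e1 : Real.exp s * ((t - s) + 1) ≤ Real.exp t := by
    calc Real.exp s * ((t - s) + 1) ≤ Real.exp s * Real.exp (t - s) := by
          have := Real.add_one_le_exp (t - s)
          nlinarith [Real.exp_pos s]
      _ = Real.exp t := by rw [← Real.exp_add]; ring_nf
  have e2 : Real.exp t ≤ Real.exp s := Real.exp_le_exp.mpr h
  have e3 : Real.exp s ≤ Real.exp m := Real.exp_le_exp.mpr hsm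
  rw [abs_of_nonneg (by linarith), abs_of_nonneg (by linarith : (0:ℝ) ≤ s - t)]
  nlinarith [Real.exp_pos s]

lemma cs_lite {g : ℝ → ℝ}
    (h1 : IntervalIntegrable (fun y => |g y|) volume 0 1)
    (h2 : IntervalIntegrable (fun y => g y ^ 2) volume 0 1) :
    (∫ y in (0:ℝ)..1, |g y|) ≤ Real.sqrt (∫ y in (0:ℝ)..1, g y ^ 2) := by
  set E := (∫ y in (0:ℝ)..1, |g y|) with hE
  set S := (∫ y in (0:ℝ)..1, g y ^ 2) with hSdef
  have hS : 0 ≤ S := intervalIntegral.integral_nonneg zero_le_one (fun x _ => sq_nonneg _)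
  have key : ∀ ε : ℝ, 0 < ε → E ≤ ε / 2 + S / (2 * ε) := by
    intro ε hε
    have hmono : E ≤ ∫ y in (0:ℝ)..1, (ε / 2 + g y ^ 2 / (2 * ε)) := by
      apply intervalIntegral.integral_mono_on zero_le_one h1
        (by exact (intervalIntegrable_const).add (h2.div_const _))
      intro x _
      have h2e : (0:ℝ) < 2 * ε := by linarith
      have key2 : |g x| * (2 * ε) ≤ ε ^ 2 + g x ^ 2 := by
        nlinarith [sq_nonneg (|g x| - ε), sq_abs (g x)]
      calc |g x| = |g x| * (2 * ε) / (2 * ε) := by field_simp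
        _ ≤ (ε ^ 2 + g x ^ 2) / (2 * ε) := by
            exact (div_le_div_iff_of_pos_right h2e).mpr key2
        _ = ε / 2 + g x ^ 2 / (2 * ε) := by field_simp
    have heq : (∫ y in (0:ℝ)..1, (ε / 2 + g y ^ 2 / (2 * ε)))
        = ε / 2 + S / (2 * ε) := by
      rw [intervalIntegral.integral_add intervalIntegrable_const (h2.div_const _),
        intervalIntegral.integral_div, intervalIntegral.integral_const]
      simp [hSdef]
    linarith [heq ▸ hmono]
  by_contra hcon
  push_neg at hcon
  rcases eq_or_lt_of_le hS with h0 | h0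
  · have hEpos : 0 < E := lt_of_le_of_lt (Real.sqrt_nonneg S) hcon
    have := key E hEpos
    rw [← h0] at this
    simp at this
    linarith [Real.sqrt_nonneg S]
  · set t := Real.sqrt S with htdef
    have htpos : 0 < t := Real.sqrt_pos.mpr h0
    have hts : t * t = S := Real.mul_self_sqrt hS
    have := key t htpos
    have hdiv : S / (2 * t) = t / 2 := by
      rw [← hts]; field_simp
    rw [hdiv] at this
    linarith

section
variable {K₀ σL σU : ℝ} {σ c b b₀ : ℝ → ℝ}

lemma bdd_meas_int {g : ℝ → ℝ}
    (hm : AEStronglyMeasurable g (volume.restrict (Set.Icc (0:ℝ) 1))) {cst : ℝ}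
    (hb : ∀ x ∈ Set.Icc (0:ℝ) 1, |g x| ≤ cst) :
    IntegrableOn g (Set.Icc (0:ℝ) 1) :=
  ⟨hm, HasFiniteIntegral.restrict_of_bounded (C := cst) measure_Icc_lt_top
    (by filter_upwards [ae_restrict_mem measurableSet_Icc] with y hy;
        rw [Real.norm_eq_abs]; exact hb y hy)⟩

lemma icc_ii {g : ℝ → ℝ} (h : IntegrableOn g (Set.Icc (0:ℝ) 1)) {x y : ℝ}
    (hx : x ∈ Set.Icc (0:ℝ) 1) (hy : y ∈ Set.Icc (0:ℝ) 1) :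
    IntervalIntegrable g volume x y :=
  (h.mono_set (Set.uIcc_subset_Icc hx hy)).intervalIntegrable

lemma K_nonneg (hc : ∀ x ∈ Set.Icc (0:ℝ) 1, |c x| ≤ K₀) : (0:ℝ) ≤ K₀ :=
  (abs_nonneg _).trans (hc 0 (by norm_num))

lemma sig_sq_lb (hσL : 0 < σL) (hσl : ∀ x ∈ Set.Icc (0:ℝ) 1, σL ≤ σ x)
    {y : ℝ} (hy : y ∈ Set.Icc (0:ℝ) 1) : σL ^ 2 ≤ σ y ^ 2 :=
  pow_le_pow_left₀ hσL.le (hσl y hy) 2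

lemma sig_sq_ub (hσL : 0 < σL) (hσl : ∀ x ∈ Set.Icc (0:ℝ) 1, σL ≤ σ x)
    (hσu : ∀ x ∈ Set.Icc (0:ℝ) 1, σ x ≤ σU)
    {y : ℝ} (hy : y ∈ Set.Icc (0:ℝ) 1) : σ y ^ 2 ≤ σU ^ 2 :=
  pow_le_pow_left₀ (hσL.le.trans (hσl y hy)) (hσu y hy) 2

lemma drift_bd (hσL : 0 < σL) (hσl : ∀ x ∈ Set.Icc (0:ℝ) 1, σL ≤ σ x)
    (hc : ∀ x ∈ Set.Icc (0:ℝ) 1, |c x| ≤ K₀)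
    {y : ℝ} (hy : y ∈ Set.Icc (0:ℝ) 1) :
    |2 * c y / σ y ^ 2| ≤ 2 * K₀ / σL ^ 2 := by
  have h1 : σL ^ 2 ≤ σ y ^ 2 := sig_sq_lb hσL hσl hy
  have h2 : (0:ℝ) < σL ^ 2 := by positivity
  have h3 : |c y| ≤ K₀ := hc y hy
  have hK : (0:ℝ) ≤ K₀ := (abs_nonneg _).trans h3
  rw [abs_div, abs_mul]
  rw [abs_of_nonneg (sq_nonneg (σ y))]
  have : |(2:ℝ)| * |c y| ≤ 2 * K₀ := by rw [abs_two]; nlinarith [abs_nonneg (c y)]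
  exact div_le_div₀ (by linarith) this h2 h1

lemma drift_int (hσL : 0 < σL) (hσm : Measurable σ)
    (hσl : ∀ x ∈ Set.Icc (0:ℝ) 1, σL ≤ σ x) (hcm : Measurable c)
    (hc : ∀ x ∈ Set.Icc (0:ℝ) 1, |c x| ≤ K₀) :
    IntegrableOn (fun y => 2 * c y / σ y ^ 2) (Set.Icc (0:ℝ) 1) :=
  bdd_meas_int
    ((measurable_const.mul hcm).div (hσm.pow_const 2)).aestronglyMeasurable.restrict
    (fun y hy => drift_bd hσL hσl hc hy)

lemma ib_cont (hσL : 0 < σL) (hσm : Measurable σ)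
    (hσl : ∀ x ∈ Set.Icc (0:ℝ) 1, σL ≤ σ x) (hcm : Measurable c)
    (hc : ∀ x ∈ Set.Icc (0:ℝ) 1, |c x| ≤ K₀) :
    ContinuousOn (Ib σ c) (Set.Icc (0:ℝ) 1) := by
  have h := intervalIntegral.continuousOn_primitive_interval
    (a := (0:ℝ)) (b := (1:ℝ)) (μ := volume)
    (f := fun y => 2 * c y / σ y ^ 2)
    (by rw [Set.uIcc_of_le zero_le_one]; exact drift_int hσL hσm hσl hcm hc)
  rwa [Set.uIcc_of_le zero_le_one] at h

lemma ib_bound (hσL : 0 < σL) (hσl : ∀ x ∈ Set.Icc (0:ℝ) 1, σL ≤ σ x)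
    (hc : ∀ x ∈ Set.Icc (0:ℝ) 1, |c x| ≤ K₀) {x : ℝ} (hx : x ∈ Set.Icc (0:ℝ) 1) :
    |Ib σ c x| ≤ 2 * K₀ / σL ^ 2 := by
  have hK : (0:ℝ) ≤ K₀ := K_nonneg hc
  have hMnn : (0:ℝ) ≤ 2 * K₀ / σL ^ 2 := by positivity
  have h := intervalIntegral.norm_integral_le_of_norm_le_const
    (a := (0:ℝ)) (b := x) (C := 2 * K₀ / σL ^ 2)
    (f := fun y => 2 * c y / σ y ^ 2)
    (by intro y hy
        rw [Set.uIoc_of_le hx.1] at hy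
        exact drift_bd hσL hσl hc ⟨hy.1.le, hy.2.trans hx.2⟩)
  calc |Ib σ c x| ≤ 2 * K₀ / σL ^ 2 * |x - 0| := h
    _ ≤ 2 * K₀ / σL ^ 2 * 1 := by
        apply mul_le_mul_of_nonneg_left _ hMnn
        rw [sub_zero, abs_of_nonneg hx.1]; exact hx.2
    _ = 2 * K₀ / σL ^ 2 := mul_one _

lemma int_abs_mono {h : ℝ → ℝ} (hint : IntegrableOn h (Set.Icc (0:ℝ) 1))
    {x : ℝ} (hx : x ∈ Set.Icc (0:ℝ) 1) :
    (∫ y in (0:ℝ)..x, |h y|) ≤ ∫ y in (0:ℝ)..1, |h y| := by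
  rw [intervalIntegral.integral_of_le hx.1, intervalIntegral.integral_of_le zero_le_one]
  apply setIntegral_mono_set ((hint.mono_set Set.Ioc_subset_Icc_self).abs)
  · exact Filter.Eventually.of_forall fun y => abs_nonneg _
  · exact HasSubset.Subset.eventuallyLE (Set.Ioc_subset_Ioc_right hx.2)

lemma gdiff_int (hbm : Measurable b) (hb₀m : Measurable b₀)
    (hb : ∀ x ∈ Set.Icc (0:ℝ) 1, |b x| ≤ K₀) (hb₀ : ∀ x ∈ Set.Icc (0:ℝ) 1, |b₀ x| ≤ K₀) :
    IntegrableOn (fun y => b y - b₀ y) (Set.Icc (0:ℝ) 1) :=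
  bdd_meas_int (hbm.sub hb₀m).aestronglyMeasurable.restrict (cst := 2 * K₀)
    (fun y hy => by
      calc |b y - b₀ y| ≤ |b y| + |b₀ y| := abs_sub _ _
        _ ≤ 2 * K₀ := by linarith [hb y hy, hb₀ y hy])

lemma ib_diff (hσL : 0 < σL) (hσm : Measurable σ)
    (hσl : ∀ x ∈ Set.Icc (0:ℝ) 1, σL ≤ σ x) (hbm : Measurable b) (hb₀m : Measurable b₀)
    (hb : ∀ x ∈ Set.Icc (0:ℝ) 1, |b x| ≤ K₀) (hb₀ : ∀ x ∈ Set.Icc (0:ℝ) 1, |b₀ x| ≤ K₀)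
    {x : ℝ} (hx : x ∈ Set.Icc (0:ℝ) 1) :
    |Ib σ b x - Ib σ b₀ x| ≤ (2 / σL ^ 2) * ∫ y in (0:ℝ)..1, |b y - b₀ y| := by
  have h01 : (0:ℝ) ∈ Set.Icc (0:ℝ) 1 := by norm_num
  have hii := icc_ii (drift_int hσL hσm hσl hbm hb) h01 hx
  have hii₀ := icc_ii (drift_int hσL hσm hσl hb₀m hb₀) h01 hx
  have heq : Ib σ b x - Ib σ b₀ x
      = ∫ y in (0:ℝ)..x, (2 * b y / σ y ^ 2 - 2 * b₀ y / σ y ^ 2) := by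
    rw [Ib, Ib, ← intervalIntegral.integral_sub hii hii₀]
  rw [heq]
  have hintd : IntegrableOn (fun y => 2 * b y / σ y ^ 2 - 2 * b₀ y / σ y ^ 2)
      (Set.Icc (0:ℝ) 1) :=
    (drift_int hσL hσm hσl hbm hb).sub (drift_int hσL hσm hσl hb₀m hb₀)
  have hgint : IntegrableOn (fun y => b y - b₀ y) (Set.Icc (0:ℝ) 1) :=
    gdiff_int hbm hb₀m hb hb₀
  have step1 : |∫ y in (0:ℝ)..x, (2 * b y / σ y ^ 2 - 2 * b₀ y / σ y ^ 2)|
      ≤ ∫ y in (0:ℝ)..x, |2 * b y / σ y ^ 2 - 2 * b₀ y / σ y ^ 2| :=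
    intervalIntegral.abs_integral_le_integral_abs hx.1
  have step2 := int_abs_mono hintd hx
  have step3 : (∫ y in (0:ℝ)..1, |2 * b y / σ y ^ 2 - 2 * b₀ y / σ y ^ 2|)
      ≤ ∫ y in (0:ℝ)..1, (2 / σL ^ 2) * |b y - b₀ y| := by
    apply intervalIntegral.integral_mono_on zero_le_one
      (icc_ii hintd h01 (by norm_num)).abs
      (((icc_ii hgint h01 (by norm_num)).abs).const_mul _)
    intro y hy
    have h1 : σL ^ 2 ≤ σ y ^ 2 := sig_sq_lb hσL hσl hy
    have h2 : (0:ℝ) < σL ^ 2 := by positivity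
    have heq2 : 2 * b y / σ y ^ 2 - 2 * b₀ y / σ y ^ 2 = 2 * (b y - b₀ y) / σ y ^ 2 := by
      ring
    rw [heq2, abs_div, abs_mul, abs_two, abs_of_nonneg (sq_nonneg (σ y))]
    calc 2 * |b y - b₀ y| / σ y ^ 2 ≤ 2 * |b y - b₀ y| / σL ^ 2 :=
          div_le_div_of_nonneg_left (by positivity) h2 h1
      _ = 2 / σL ^ 2 * |b y - b₀ y| := by ring
  have step4 : (∫ y in (0:ℝ)..1, (2 / σL ^ 2) * |b y - b₀ y|)
      = (2 / σL ^ 2) * ∫ y in (0:ℝ)..1, |b y - b₀ y| :=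
    intervalIntegral.integral_const_mul _ _
  linarith

lemma expIb_int (hσL : 0 < σL) (hσm : Measurable σ)
    (hσl : ∀ x ∈ Set.Icc (0:ℝ) 1, σL ≤ σ x) (hcm : Measurable c)
    (hc : ∀ x ∈ Set.Icc (0:ℝ) 1, |c x| ≤ K₀) :
    IntegrableOn (fun y => Real.exp (-(Ib σ c y))) (Set.Icc (0:ℝ) 1) :=
  ((Real.continuous_exp.comp_continuousOn
    (ib_cont hσL hσm hσl hcm hc).neg)).integrableOn_Icc

lemma exp_ib_ub (hσL : 0 < σL) (hσl : ∀ x ∈ Set.Icc (0:ℝ) 1, σL ≤ σ x)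
    (hc : ∀ x ∈ Set.Icc (0:ℝ) 1, |c x| ≤ K₀) {y : ℝ} (hy : y ∈ Set.Icc (0:ℝ) 1) :
    Real.exp (-(Ib σ c y)) ≤ Real.exp (2 * K₀ / σL ^ 2) := by
  have := abs_le.mp (ib_bound hσL hσl hc hy)
  exact Real.exp_le_exp.mpr (by linarith [this.1])

lemma exp_ib_lb (hσL : 0 < σL) (hσl : ∀ x ∈ Set.Icc (0:ℝ) 1, σL ≤ σ x)
    (hc : ∀ x ∈ Set.Icc (0:ℝ) 1, |c x| ≤ K₀) {y : ℝ} (hy : y ∈ Set.Icc (0:ℝ) 1) :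
    Real.exp (-(2 * K₀ / σL ^ 2)) ≤ Real.exp (-(Ib σ c y)) := by
  have := abs_le.mp (ib_bound hσL hσl hc hy)
  exact Real.exp_le_exp.mpr (by linarith [this.2])

lemma exp_ib_ub' (hσL : 0 < σL) (hσl : ∀ x ∈ Set.Icc (0:ℝ) 1, σL ≤ σ x)
    (hc : ∀ x ∈ Set.Icc (0:ℝ) 1, |c x| ≤ K₀) {y : ℝ} (hy : y ∈ Set.Icc (0:ℝ) 1) :
    Real.exp (Ib σ c y) ≤ Real.exp (2 * K₀ / σL ^ 2) :=
  Real.exp_le_exp.mpr (le_trans (le_abs_self _) (ib_bound hσL hσl hc hy))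

lemma exp_ib_lb' (hσL : 0 < σL) (hσl : ∀ x ∈ Set.Icc (0:ℝ) 1, σL ≤ σ x)
    (hc : ∀ x ∈ Set.Icc (0:ℝ) 1, |c x| ≤ K₀) {y : ℝ} (hy : y ∈ Set.Icc (0:ℝ) 1) :
    Real.exp (-(2 * K₀ / σL ^ 2)) ≤ Real.exp (Ib σ c y) := by
  have := abs_le.mp (ib_bound hσL hσl hc hy)
  exact Real.exp_le_exp.mpr (by linarith [this.1])

lemma J_hi (hσL : 0 < σL) (hσm : Measurable σ)
    (hσl : ∀ x ∈ Set.Icc (0:ℝ) 1, σL ≤ σ x) (hcm : Measurable c)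
    (hc : ∀ x ∈ Set.Icc (0:ℝ) 1, |c x| ≤ K₀) {x : ℝ} (hx : x ∈ Set.Icc (0:ℝ) 1) :
    (∫ y in x..(1:ℝ), Real.exp (-(Ib σ c y))) ≤ Real.exp (2 * K₀ / σL ^ 2) := by
  have h := intervalIntegral.norm_integral_le_of_norm_le_const
    (a := x) (b := (1:ℝ)) (C := Real.exp (2 * K₀ / σL ^ 2))
    (f := fun y => Real.exp (-(Ib σ c y)))
    (by intro y hy
        rw [Set.uIoc_of_le hx.2] at hy
        rw [Real.norm_eq_abs, abs_of_nonneg (Real.exp_pos _).le]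
        exact exp_ib_ub hσL hσl hc ⟨hx.1.trans hy.1.le, hy.2⟩)
  calc (∫ y in x..(1:ℝ), Real.exp (-(Ib σ c y)))
      ≤ |∫ y in x..(1:ℝ), Real.exp (-(Ib σ c y))| := le_abs_self _
    _ ≤ Real.exp (2 * K₀ / σL ^ 2) * |1 - x| := h
    _ ≤ Real.exp (2 * K₀ / σL ^ 2) * 1 := by
        apply mul_le_mul_of_nonneg_left _ (Real.exp_pos _).le
        rw [abs_of_nonneg (by linarith [hx.2])]; linarith [hx.1]
    _ = _ := mul_one _

lemma J'_hi (hσL : 0 < σL) (hσm : Measurable σ)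
    (hσl : ∀ x ∈ Set.Icc (0:ℝ) 1, σL ≤ σ x) (hcm : Measurable c)
    (hc : ∀ x ∈ Set.Icc (0:ℝ) 1, |c x| ≤ K₀) {x : ℝ} (hx : x ∈ Set.Icc (0:ℝ) 1) :
    (∫ y in (0:ℝ)..x, Real.exp (-(Ib σ c y))) ≤ Real.exp (2 * K₀ / σL ^ 2) := by
  have h := intervalIntegral.norm_integral_le_of_norm_le_const
    (a := (0:ℝ)) (b := x) (C := Real.exp (2 * K₀ / σL ^ 2))
    (f := fun y => Real.exp (-(Ib σ c y)))
    (by intro y hy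
        rw [Set.uIoc_of_le hx.1] at hy
        rw [Real.norm_eq_abs, abs_of_nonneg (Real.exp_pos _).le]
        exact exp_ib_ub hσL hσl hc ⟨hy.1.le, hy.2.trans hx.2⟩)
  calc (∫ y in (0:ℝ)..x, Real.exp (-(Ib σ c y)))
      ≤ |∫ y in (0:ℝ)..x, Real.exp (-(Ib σ c y))| := le_abs_self _
    _ ≤ Real.exp (2 * K₀ / σL ^ 2) * |x - 0| := h
    _ ≤ Real.exp (2 * K₀ / σL ^ 2) * 1 := by
        apply mul_le_mul_of_nonneg_left _ (Real.exp_pos _).le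
        rw [sub_zero, abs_of_nonneg hx.1]; exact hx.2
    _ = _ := mul_one _

lemma J_lo (hσL : 0 < σL) (hσm : Measurable σ)
    (hσl : ∀ x ∈ Set.Icc (0:ℝ) 1, σL ≤ σ x) (hcm : Measurable c)
    (hc : ∀ x ∈ Set.Icc (0:ℝ) 1, |c x| ≤ K₀) {x : ℝ} (hx : x ∈ Set.Icc (0:ℝ) 1) :
    (1 - x) * Real.exp (-(2 * K₀ / σL ^ 2))
      ≤ ∫ y in x..(1:ℝ), Real.exp (-(Ib σ c y)) := by
  have h1 : (1:ℝ) ∈ Set.Icc (0:ℝ) 1 := by norm_num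
  have h := intervalIntegral.integral_mono_on (μ := volume) hx.2
    intervalIntegrable_const (icc_ii (expIb_int hσL hσm hσl hcm hc) hx h1)
    (g := fun y => Real.exp (-(Ib σ c y)))
    (fun y hy => exp_ib_lb hσL hσl hc ⟨hx.1.trans hy.1, hy.2⟩)
  simpa using h

lemma J'_lo (hσL : 0 < σL) (hσm : Measurable σ)
    (hσl : ∀ x ∈ Set.Icc (0:ℝ) 1, σL ≤ σ x) (hcm : Measurable c)
    (hc : ∀ x ∈ Set.Icc (0:ℝ) 1, |c x| ≤ K₀) {x : ℝ} (hx : x ∈ Set.Icc (0:ℝ) 1) :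
    x * Real.exp (-(2 * K₀ / σL ^ 2))
      ≤ ∫ y in (0:ℝ)..x, Real.exp (-(Ib σ c y)) := by
  have h0 : (0:ℝ) ∈ Set.Icc (0:ℝ) 1 := by norm_num
  have h := intervalIntegral.integral_mono_on (μ := volume) hx.1
    intervalIntegrable_const (icc_ii (expIb_int hσL hσm hσl hcm hc) h0 hx)
    (g := fun y => Real.exp (-(Ib σ c y)))
    (fun y hy => exp_ib_lb hσL hσl hc ⟨hy.1, hy.2.trans hx.2⟩)
  simpa using h

lemma J_diff (hσL : 0 < σL) (hσm : Measurable σ)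
    (hσl : ∀ x ∈ Set.Icc (0:ℝ) 1, σL ≤ σ x) (hbm : Measurable b) (hb₀m : Measurable b₀)
    (hb : ∀ x ∈ Set.Icc (0:ℝ) 1, |b x| ≤ K₀) (hb₀ : ∀ x ∈ Set.Icc (0:ℝ) 1, |b₀ x| ≤ K₀)
    {x : ℝ} (hx : x ∈ Set.Icc (0:ℝ) 1) :
    |(∫ y in x..(1:ℝ), Real.exp (-(Ib σ b y)))
        - ∫ y in x..(1:ℝ), Real.exp (-(Ib σ b₀ y))|
      ≤ Real.exp (2 * K₀ / σL ^ 2) * ((2 / σL ^ 2) * ∫ y in (0:ℝ)..1, |b y - b₀ y|) := by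
  have h1 : (1:ℝ) ∈ Set.Icc (0:ℝ) 1 := by norm_num
  have hE : (0:ℝ) ≤ ∫ y in (0:ℝ)..1, |b y - b₀ y| :=
    intervalIntegral.integral_nonneg zero_le_one (fun y _ => abs_nonneg _)
  have hCnn : (0:ℝ) ≤ Real.exp (2 * K₀ / σL ^ 2)
      * ((2 / σL ^ 2) * ∫ y in (0:ℝ)..1, |b y - b₀ y|) := by positivity
  rw [← intervalIntegral.integral_sub
    (icc_ii (expIb_int hσL hσm hσl hbm hb) hx h1)
    (icc_ii (expIb_int hσL hσm hσl hb₀m hb₀) hx h1)]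
  have h := intervalIntegral.norm_integral_le_of_norm_le_const
    (a := x) (b := (1:ℝ))
    (C := Real.exp (2 * K₀ / σL ^ 2) * ((2 / σL ^ 2) * ∫ y in (0:ℝ)..1, |b y - b₀ y|))
    (f := fun y => Real.exp (-(Ib σ b y)) - Real.exp (-(Ib σ b₀ y)))
    (by intro y hy
        rw [Set.uIoc_of_le hx.2] at hy
        have hyI : y ∈ Set.Icc (0:ℝ) 1 := ⟨hx.1.trans hy.1.le, hy.2⟩
        rw [Real.norm_eq_abs]
        calc |Real.exp (-(Ib σ b y)) - Real.exp (-(Ib σ b₀ y))|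
            ≤ Real.exp (2 * K₀ / σL ^ 2) * |(-(Ib σ b y)) - (-(Ib σ b₀ y))| :=
              exp_lip (by rw [abs_neg]; exact ib_bound hσL hσl hb hyI)
                (by rw [abs_neg]; exact ib_bound hσL hσl hb₀ hyI)
          _ ≤ _ := by
              apply mul_le_mul_of_nonneg_left _ (Real.exp_pos _).le
              rw [show (-(Ib σ b y)) - (-(Ib σ b₀ y)) = -(Ib σ b y - Ib σ b₀ y) by ring,
                abs_neg]
              exact ib_diff hσL hσm hσl hbm hb₀m hb hb₀ hyI)
  calc |∫ y in x..(1:ℝ), (Real.exp (-(Ib σ b y)) - Real.exp (-(Ib σ b₀ y)))|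
      ≤ _ * |1 - x| := h
    _ ≤ _ * 1 := by
        apply mul_le_mul_of_nonneg_left _ hCnn
        rw [abs_of_nonneg (by linarith [hx.2])]; linarith [hx.1]
    _ = _ := mul_one _

lemma J'_diff (hσL : 0 < σL) (hσm : Measurable σ)
    (hσl : ∀ x ∈ Set.Icc (0:ℝ) 1, σL ≤ σ x) (hbm : Measurable b) (hb₀m : Measurable b₀)
    (hb : ∀ x ∈ Set.Icc (0:ℝ) 1, |b x| ≤ K₀) (hb₀ : ∀ x ∈ Set.Icc (0:ℝ) 1, |b₀ x| ≤ K₀)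
    {x : ℝ} (hx : x ∈ Set.Icc (0:ℝ) 1) :
    |(∫ y in (0:ℝ)..x, Real.exp (-(Ib σ b y)))
        - ∫ y in (0:ℝ)..x, Real.exp (-(Ib σ b₀ y))|
      ≤ Real.exp (2 * K₀ / σL ^ 2) * ((2 / σL ^ 2) * ∫ y in (0:ℝ)..1, |b y - b₀ y|) := by
  have h0 : (0:ℝ) ∈ Set.Icc (0:ℝ) 1 := by norm_num
  have hE : (0:ℝ) ≤ ∫ y in (0:ℝ)..1, |b y - b₀ y| :=
    intervalIntegral.integral_nonneg zero_le_one (fun y _ => abs_nonneg _)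
  have hCnn : (0:ℝ) ≤ Real.exp (2 * K₀ / σL ^ 2)
      * ((2 / σL ^ 2) * ∫ y in (0:ℝ)..1, |b y - b₀ y|) := by positivity
  rw [← intervalIntegral.integral_sub
    (icc_ii (expIb_int hσL hσm hσl hbm hb) h0 hx)
    (icc_ii (expIb_int hσL hσm hσl hb₀m hb₀) h0 hx)]
  have h := intervalIntegral.norm_integral_le_of_norm_le_const
    (a := (0:ℝ)) (b := x)
    (C := Real.exp (2 * K₀ / σL ^ 2) * ((2 / σL ^ 2) * ∫ y in (0:ℝ)..1, |b y - b₀ y|))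
    (f := fun y => Real.exp (-(Ib σ b y)) - Real.exp (-(Ib σ b₀ y)))
    (by intro y hy
        rw [Set.uIoc_of_le hx.1] at hy
        have hyI : y ∈ Set.Icc (0:ℝ) 1 := ⟨hy.1.le, hy.2.trans hx.2⟩
        rw [Real.norm_eq_abs]
        calc |Real.exp (-(Ib σ b y)) - Real.exp (-(Ib σ b₀ y))|
            ≤ Real.exp (2 * K₀ / σL ^ 2) * |(-(Ib σ b y)) - (-(Ib σ b₀ y))| :=
              exp_lip (by rw [abs_neg]; exact ib_bound hσL hσl hb hyI)
                (by rw [abs_neg]; exact ib_bound hσL hσl hb₀ hyI)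
          _ ≤ _ := by
              apply mul_le_mul_of_nonneg_left _ (Real.exp_pos _).le
              rw [show (-(Ib σ b y)) - (-(Ib σ b₀ y)) = -(Ib σ b y - Ib σ b₀ y) by ring,
                abs_neg]
              exact ib_diff hσL hσm hσl hbm hb₀m hb hb₀ hyI)
  calc |∫ y in (0:ℝ)..x, (Real.exp (-(Ib σ b y)) - Real.exp (-(Ib σ b₀ y)))|
      ≤ _ * |x - 0| := h
    _ ≤ _ * 1 := by
        apply mul_le_mul_of_nonneg_left _ hCnn
        rw [sub_zero, abs_of_nonneg hx.1]; exact hx.2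
    _ = _ := mul_one _

lemma G_lo (hσL : 0 < σL) (hσm : Measurable σ)
    (hσl : ∀ x ∈ Set.Icc (0:ℝ) 1, σL ≤ σ x) (hcm : Measurable c)
    (hc : ∀ x ∈ Set.Icc (0:ℝ) 1, |c x| ≤ K₀) {x : ℝ} (hx : x ∈ Set.Icc (0:ℝ) 1) :
    Real.exp (-(2 * (2 * K₀ / σL ^ 2))) ≤ Gf σ c x := by
  have hK : (0:ℝ) ≤ K₀ := K_nonneg hc
  have hMnn : (0:ℝ) ≤ 2 * K₀ / σL ^ 2 := by positivity
  have h1 : (1:ℝ) ∈ Set.Icc (0:ℝ) 1 := by norm_num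
  have hA : Real.exp (-(2 * K₀ / σL ^ 2)) ≤ Real.exp (Ib σ c 1) := exp_ib_lb' hσL hσl hc h1
  have hJ := J_lo hσL hσm hσl hcm hc hx
  have hJ' := J'_lo hσL hσm hσl hcm hc hx
  have hJnn : (0:ℝ) ≤ (1 - x) * Real.exp (-(2 * K₀ / σL ^ 2)) := by
    have h2 := hx.2
    have := (Real.exp_pos (-(2 * K₀ / σL ^ 2))).le
    nlinarith
  have prod : Real.exp (-(2 * K₀ / σL ^ 2)) * ((1 - x) * Real.exp (-(2 * K₀ / σL ^ 2)))
      ≤ Real.exp (Ib σ c 1) * ∫ y in x..(1:ℝ), Real.exp (-(Ib σ c y)) :=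
    mul_le_mul hA hJ hJnn ((Real.exp_pos _).le.trans hA)
  have hexp2 : Real.exp (-(2 * K₀ / σL ^ 2)) * Real.exp (-(2 * K₀ / σL ^ 2))
      = Real.exp (-(2 * (2 * K₀ / σL ^ 2))) := by rw [← Real.exp_add]; ring_nf
  have hle : Real.exp (-(2 * (2 * K₀ / σL ^ 2))) ≤ Real.exp (-(2 * K₀ / σL ^ 2)) :=
    Real.exp_le_exp.mpr (by linarith)
  rw [Gf]
  nlinarith [hx.1, hx.2, mul_nonneg hx.1 (sub_nonneg.mpr hle)]

lemma G_hi (hσL : 0 < σL) (hσm : Measurable σ)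
    (hσl : ∀ x ∈ Set.Icc (0:ℝ) 1, σL ≤ σ x) (hcm : Measurable c)
    (hc : ∀ x ∈ Set.Icc (0:ℝ) 1, |c x| ≤ K₀) {x : ℝ} (hx : x ∈ Set.Icc (0:ℝ) 1) :
    Gf σ c x ≤ 2 * Real.exp (2 * (2 * K₀ / σL ^ 2)) := by
  have hK : (0:ℝ) ≤ K₀ := K_nonneg hc
  have hMnn : (0:ℝ) ≤ 2 * K₀ / σL ^ 2 := by positivity
  have h1 : (1:ℝ) ∈ Set.Icc (0:ℝ) 1 := by norm_num
  have hA : Real.exp (Ib σ c 1) ≤ Real.exp (2 * K₀ / σL ^ 2) := exp_ib_ub' hσL hσl hc h1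
  have hJ := J_hi hσL hσm hσl hcm hc hx
  have hJ' := J'_hi hσL hσm hσl hcm hc hx
  have hJnn : (0:ℝ) ≤ ∫ y in x..(1:ℝ), Real.exp (-(Ib σ c y)) := by
    have := J_lo hσL hσm hσl hcm hc hx
    have h2 := hx.2
    nlinarith [(Real.exp_pos (-(2 * K₀ / σL ^ 2))).le]
  have prod : Real.exp (Ib σ c 1) * (∫ y in x..(1:ℝ), Real.exp (-(Ib σ c y)))
      ≤ Real.exp (2 * K₀ / σL ^ 2) * Real.exp (2 * K₀ / σL ^ 2) :=
    mul_le_mul hA hJ hJnn (Real.exp_pos _).le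
  have hexp2 : Real.exp (2 * K₀ / σL ^ 2) * Real.exp (2 * K₀ / σL ^ 2)
      = Real.exp (2 * (2 * K₀ / σL ^ 2)) := by rw [← Real.exp_add]; ring_nf
  have hle : Real.exp (2 * K₀ / σL ^ 2) ≤ Real.exp (2 * (2 * K₀ / σL ^ 2)) :=
    Real.exp_le_exp.mpr (by linarith)
  rw [Gf]
  linarith [hexp2 ▸ prod]

lemma G_diff (hσL : 0 < σL) (hσm : Measurable σ)
    (hσl : ∀ x ∈ Set.Icc (0:ℝ) 1, σL ≤ σ x) (hbm : Measurable b) (hb₀m : Measurable b₀)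
    (hb : ∀ x ∈ Set.Icc (0:ℝ) 1, |b x| ≤ K₀) (hb₀ : ∀ x ∈ Set.Icc (0:ℝ) 1, |b₀ x| ≤ K₀)
    {x : ℝ} (hx : x ∈ Set.Icc (0:ℝ) 1) :
    |Gf σ b x - Gf σ b₀ x|
      ≤ 3 * Real.exp (2 * (2 * K₀ / σL ^ 2))
        * ((2 / σL ^ 2) * ∫ y in (0:ℝ)..1, |b y - b₀ y|) := by
  have hK : (0:ℝ) ≤ K₀ := K_nonneg hb
  have hMnn : (0:ℝ) ≤ 2 * K₀ / σL ^ 2 := by positivity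
  have h1 : (1:ℝ) ∈ Set.Icc (0:ℝ) 1 := by norm_num
  have hE : (0:ℝ) ≤ ∫ y in (0:ℝ)..1, |b y - b₀ y| :=
    intervalIntegral.integral_nonneg zero_le_one (fun y _ => abs_nonneg _)
  set E := ∫ y in (0:ℝ)..1, |b y - b₀ y| with hEdef
  set M := 2 * K₀ / σL ^ 2 with hMdef
  set a := Real.exp (Ib σ b 1) with ha
  set a₀ := Real.exp (Ib σ b₀ 1) with ha₀
  set J := ∫ y in x..(1:ℝ), Real.exp (-(Ib σ b y)) with hJdef
  set J₀ := ∫ y in x..(1:ℝ), Real.exp (-(Ib σ b₀ y)) with hJ₀def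
  set P := ∫ y in (0:ℝ)..x, Real.exp (-(Ib σ b y)) with hPdef
  set P₀ := ∫ y in (0:ℝ)..x, Real.exp (-(Ib σ b₀ y)) with hP₀def
  have hadiff : |a - a₀| ≤ Real.exp M * ((2 / σL ^ 2) * E) := by
    calc |a - a₀| ≤ Real.exp M * |Ib σ b 1 - Ib σ b₀ 1| :=
          exp_lip (ib_bound hσL hσl hb h1) (ib_bound hσL hσl hb₀ h1)
      _ ≤ Real.exp M * ((2 / σL ^ 2) * E) :=
          mul_le_mul_of_nonneg_left
            (ib_diff hσL hσm hσl hbm hb₀m hb hb₀ h1) (Real.exp_pos _).le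
  have hJd := J_diff hσL hσm hσl hbm hb₀m hb hb₀ hx
  have hPd := J'_diff hσL hσm hσl hbm hb₀m hb hb₀ hx
  have hJhi := J_hi hσL hσm hσl hbm hb hx
  have hJnn : (0:ℝ) ≤ J := by
    have := J_lo hσL hσm hσl hbm hb hx
    have h2 := hx.2
    nlinarith [(Real.exp_pos (-M)).le]
  have ha₀hi : a₀ ≤ Real.exp M := exp_ib_ub' hσL hσl hb₀ h1
  have hd : Gf σ b x - Gf σ b₀ x = (a - a₀) * J + a₀ * (J - J₀) + (P - P₀) := by
    rw [Gf, Gf]; ring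
  have t1 : |(a - a₀) * J| ≤ (Real.exp M * ((2 / σL ^ 2) * E)) * Real.exp M := by
    rw [abs_mul]
    exact mul_le_mul hadiff (by rw [abs_of_nonneg hJnn]; exact hJhi)
      (abs_nonneg _) (by positivity)
  have t2 : |a₀ * (J - J₀)| ≤ Real.exp M * (Real.exp M * ((2 / σL ^ 2) * E)) := by
    rw [abs_mul, abs_of_pos (Real.exp_pos _)]
    exact mul_le_mul ha₀hi hJd (abs_nonneg _) (Real.exp_pos _).le
  have hexp2 : Real.exp M * Real.exp M = Real.exp (2 * M) := by
    rw [← Real.exp_add]; ring_nf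
  have hle : Real.exp M ≤ Real.exp (2 * M) := Real.exp_le_exp.mpr (by linarith)
  calc |Gf σ b x - Gf σ b₀ x| = |(a - a₀) * J + a₀ * (J - J₀) + (P - P₀)| := by rw [hd]
    _ ≤ |(a - a₀) * J + a₀ * (J - J₀)| + |P - P₀| := abs_add_le _ _
    _ ≤ |(a - a₀) * J| + |a₀ * (J - J₀)| + |P - P₀| := by
        linarith [abs_add_le ((a - a₀) * J) (a₀ * (J - J₀))]
    _ ≤ 3 * Real.exp (2 * M) * ((2 / σL ^ 2) * E) := by
        have r1 : (Real.exp M * ((2 / σL ^ 2) * E)) * Real.exp M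
            = Real.exp (2 * M) * ((2 / σL ^ 2) * E) := by rw [← hexp2]; ring
        have r2 : Real.exp M * (Real.exp M * ((2 / σL ^ 2) * E))
            = Real.exp (2 * M) * ((2 / σL ^ 2) * E) := by rw [← hexp2]; ring
        have r3 : Real.exp M * ((2 / σL ^ 2) * E)
            ≤ Real.exp (2 * M) * ((2 / σL ^ 2) * E) :=
          mul_le_mul_of_nonneg_right hle (by positivity)
        linarith [t1, t2, hPd, r1, r2, r3]

lemma Gf_cont (hσL : 0 < σL) (hσm : Measurable σ)
    (hσl : ∀ x ∈ Set.Icc (0:ℝ) 1, σL ≤ σ x) (hcm : Measurable c)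
    (hc : ∀ x ∈ Set.Icc (0:ℝ) 1, |c x| ≤ K₀) :
    ContinuousOn (Gf σ c) (Set.Icc (0:ℝ) 1) := by
  have hint : IntegrableOn (fun y => Real.exp (-(Ib σ c y))) (Set.uIcc (0:ℝ) 1) := by
    rw [Set.uIcc_of_le zero_le_one]; exact expIb_int hσL hσm hσl hcm hc
  have h1 : ContinuousOn (fun x => ∫ y in x..(1:ℝ), Real.exp (-(Ib σ c y)))
      (Set.Icc (0:ℝ) 1) := by
    have := intervalIntegral.continuousOn_primitive_interval_left (μ := volume) hint
    rwa [Set.uIcc_of_le zero_le_one] at this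
  have h2 : ContinuousOn (fun x => ∫ y in (0:ℝ)..x, Real.exp (-(Ib σ c y)))
      (Set.Icc (0:ℝ) 1) := by
    have := intervalIntegral.continuousOn_primitive_interval (μ := volume) hint
    rwa [Set.uIcc_of_le zero_le_one] at this
  exact (continuousOn_const.mul h1).add h2

lemma Ff_aesm (hσL : 0 < σL) (hσm : Measurable σ)
    (hσl : ∀ x ∈ Set.Icc (0:ℝ) 1, σL ≤ σ x) (hcm : Measurable c)
    (hc : ∀ x ∈ Set.Icc (0:ℝ) 1, |c x| ≤ K₀) :
    AEStronglyMeasurable (Ff σ c) (volume.restrict (Set.Icc (0:ℝ) 1)) := by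
  have h1 : ContinuousOn (fun x => Real.exp (Ib σ c x)) (Set.Icc (0:ℝ) 1) :=
    Real.continuous_exp.comp_continuousOn (ib_cont hσL hσm hσl hcm hc)
  have m1 : AEMeasurable (fun x => Real.exp (Ib σ c x))
      (volume.restrict (Set.Icc (0:ℝ) 1)) := h1.aemeasurable measurableSet_Icc
  have m2 : AEMeasurable (Gf σ c) (volume.restrict (Set.Icc (0:ℝ) 1)) :=
    (Gf_cont hσL hσm hσl hcm hc).aemeasurable measurableSet_Icc
  exact ((m1.div (hσm.pow_const 2).aemeasurable.restrict).mul m2).aestronglyMeasurable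

lemma F_lo (hσL : 0 < σL) (hσm : Measurable σ)
    (hσl : ∀ x ∈ Set.Icc (0:ℝ) 1, σL ≤ σ x) (hσu : ∀ x ∈ Set.Icc (0:ℝ) 1, σ x ≤ σU)
    (hcm : Measurable c)
    (hc : ∀ x ∈ Set.Icc (0:ℝ) 1, |c x| ≤ K₀) {x : ℝ} (hx : x ∈ Set.Icc (0:ℝ) 1) :
    Real.exp (-(3 * (2 * K₀ / σL ^ 2))) / σU ^ 2 ≤ Ff σ c x := by
  have hσU : (0:ℝ) < σU := hσL.trans_le ((hσl x hx).trans (hσu x hx))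
  have hs1 : σL ^ 2 ≤ σ x ^ 2 := sig_sq_lb hσL hσl hx
  have hs2 : σ x ^ 2 ≤ σU ^ 2 := sig_sq_ub hσL hσl hσu hx
  have hsp : (0:ℝ) < σ x ^ 2 := lt_of_lt_of_le (by positivity) hs1
  set M := 2 * K₀ / σL ^ 2 with hMdef
  have hAd : Real.exp (-M) / σU ^ 2 ≤ Real.exp (Ib σ c x) / σ x ^ 2 :=
    div_le_div₀ (Real.exp_pos _).le (exp_ib_lb' hσL hσl hc hx) hsp hs2
  have hG := G_lo hσL hσm hσl hcm hc hx
  have hprod : (Real.exp (-M) / σU ^ 2) * Real.exp (-(2 * M)) ≤ Ff σ c x := by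
    rw [Ff]
    exact mul_le_mul hAd hG (Real.exp_pos _).le (by positivity)
  have hid : (Real.exp (-M) / σU ^ 2) * Real.exp (-(2 * M))
      = Real.exp (-(3 * M)) / σU ^ 2 := by
    rw [div_mul_eq_mul_div, ← Real.exp_add]; ring_nf
  linarith [hid ▸ hprod]

lemma F_hi (hσL : 0 < σL) (hσm : Measurable σ)
    (hσl : ∀ x ∈ Set.Icc (0:ℝ) 1, σL ≤ σ x) (hcm : Measurable c)
    (hc : ∀ x ∈ Set.Icc (0:ℝ) 1, |c x| ≤ K₀) {x : ℝ} (hx : x ∈ Set.Icc (0:ℝ) 1) :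
    Ff σ c x ≤ 2 * Real.exp (3 * (2 * K₀ / σL ^ 2)) / σL ^ 2 := by
  have hs1 : σL ^ 2 ≤ σ x ^ 2 := sig_sq_lb hσL hσl hx
  have hsp : (0:ℝ) < σL ^ 2 := by positivity
  set M := 2 * K₀ / σL ^ 2 with hMdef
  have hAd : Real.exp (Ib σ c x) / σ x ^ 2 ≤ Real.exp M / σL ^ 2 :=
    div_le_div₀ (Real.exp_pos _).le (exp_ib_ub' hσL hσl hc hx) hsp hs1
  have hG := G_hi hσL hσm hσl hcm hc hx
  have hGnn : (0:ℝ) ≤ Gf σ c x :=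
    (Real.exp_pos _).le.trans (G_lo hσL hσm hσl hcm hc hx)
  have hprod : Ff σ c x ≤ (Real.exp M / σL ^ 2) * (2 * Real.exp (2 * M)) := by
    rw [Ff]
    exact mul_le_mul hAd hG hGnn (by positivity)
  have hid : (Real.exp M / σL ^ 2) * (2 * Real.exp (2 * M))
      = 2 * Real.exp (3 * M) / σL ^ 2 := by
    rw [div_mul_eq_mul_div, ← mul_assoc, mul_comm (Real.exp M) 2, mul_assoc,
      ← Real.exp_add]
    ring_nf
  linarith [hid ▸ hprod]

lemma F_diff (hσL : 0 < σL) (hσm : Measurable σ)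
    (hσl : ∀ x ∈ Set.Icc (0:ℝ) 1, σL ≤ σ x) (hbm : Measurable b) (hb₀m : Measurable b₀)
    (hb : ∀ x ∈ Set.Icc (0:ℝ) 1, |b x| ≤ K₀) (hb₀ : ∀ x ∈ Set.Icc (0:ℝ) 1, |b₀ x| ≤ K₀)
    {x : ℝ} (hx : x ∈ Set.Icc (0:ℝ) 1) :
    |Ff σ b x - Ff σ b₀ x|
      ≤ (5 * Real.exp (3 * (2 * K₀ / σL ^ 2)) / σL ^ 2)
        * ((2 / σL ^ 2) * ∫ y in (0:ℝ)..1, |b y - b₀ y|) := by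
  have hK : (0:ℝ) ≤ K₀ := K_nonneg hb
  have hs1 : σL ^ 2 ≤ σ x ^ 2 := sig_sq_lb hσL hσl hx
  have hsp : (0:ℝ) < σL ^ 2 := by positivity
  have hE : (0:ℝ) ≤ ∫ y in (0:ℝ)..1, |b y - b₀ y| :=
    intervalIntegral.integral_nonneg zero_le_one (fun y _ => abs_nonneg _)
  set E := ∫ y in (0:ℝ)..1, |b y - b₀ y| with hEdef
  set M := 2 * K₀ / σL ^ 2 with hMdef
  have hMnn : (0:ℝ) ≤ M := by rw [hMdef]; positivity
  set A := Real.exp (Ib σ b x) with hA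
  set A₀ := Real.exp (Ib σ b₀ x) with hA₀
  have hADiff : |A - A₀| ≤ Real.exp M * ((2 / σL ^ 2) * E) := by
    calc |A - A₀| ≤ Real.exp M * |Ib σ b x - Ib σ b₀ x| :=
          exp_lip (ib_bound hσL hσl hb hx) (ib_bound hσL hσl hb₀ hx)
      _ ≤ _ := mul_le_mul_of_nonneg_left
          (ib_diff hσL hσm hσl hbm hb₀m hb hb₀ hx) (Real.exp_pos _).le
  have hGb : |Gf σ b x| ≤ 2 * Real.exp (2 * M) := by
    rw [abs_of_nonneg ((Real.exp_pos _).le.trans (G_lo hσL hσm hσl hbm hb hx))]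
    exact G_hi hσL hσm hσl hbm hb hx
  have hA₀hi : A₀ ≤ Real.exp M := exp_ib_ub' hσL hσl hb₀ hx
  have hGd := G_diff hσL hσm hσl hbm hb₀m hb hb₀ hx
  have hnum : |A * Gf σ b x - A₀ * Gf σ b₀ x|
      ≤ 5 * Real.exp (3 * M) * ((2 / σL ^ 2) * E) := by
    have hd : A * Gf σ b x - A₀ * Gf σ b₀ x
        = (A - A₀) * Gf σ b x + A₀ * (Gf σ b x - Gf σ b₀ x) := by ring
    have t1 : |(A - A₀) * Gf σ b x|
        ≤ (Real.exp M * ((2 / σL ^ 2) * E)) * (2 * Real.exp (2 * M)) := by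
      rw [abs_mul]
      exact mul_le_mul hADiff hGb (abs_nonneg _) (by positivity)
    have t2 : |A₀ * (Gf σ b x - Gf σ b₀ x)|
        ≤ Real.exp M * (3 * Real.exp (2 * M) * ((2 / σL ^ 2) * E)) := by
      rw [abs_mul, abs_of_pos (Real.exp_pos _)]
      exact mul_le_mul hA₀hi hGd (abs_nonneg _) (Real.exp_pos _).le
    have hexp3 : Real.exp M * Real.exp (2 * M) = Real.exp (3 * M) := by
      rw [← Real.exp_add]; ring_nf
    have r1 : (Real.exp M * ((2 / σL ^ 2) * E)) * (2 * Real.exp (2 * M))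
        = 2 * Real.exp (3 * M) * ((2 / σL ^ 2) * E) := by rw [← hexp3]; ring
    have r2 : Real.exp M * (3 * Real.exp (2 * M) * ((2 / σL ^ 2) * E))
        = 3 * Real.exp (3 * M) * ((2 / σL ^ 2) * E) := by rw [← hexp3]; ring
    calc |A * Gf σ b x - A₀ * Gf σ b₀ x|
        ≤ |(A - A₀) * Gf σ b x| + |A₀ * (Gf σ b x - Gf σ b₀ x)| := by
          rw [hd]; exact abs_add_le _ _
      _ ≤ 5 * Real.exp (3 * M) * ((2 / σL ^ 2) * E) := by linarith [r1 ▸ t1, r2 ▸ t2]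
  have heq : Ff σ b x - Ff σ b₀ x = (A * Gf σ b x - A₀ * Gf σ b₀ x) / σ x ^ 2 := by
    rw [Ff, Ff]; ring
  rw [heq, abs_div, abs_of_nonneg (sq_nonneg (σ x))]
  calc |A * Gf σ b x - A₀ * Gf σ b₀ x| / σ x ^ 2
      ≤ (5 * Real.exp (3 * M) * ((2 / σL ^ 2) * E)) / σL ^ 2 :=
        div_le_div₀ (by positivity) hnum hsp hs1
    _ = (5 * Real.exp (3 * M) / σL ^ 2) * ((2 / σL ^ 2) * E) := by ring

lemma Ff_int (hσL : 0 < σL) (hσm : Measurable σ)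
    (hσl : ∀ x ∈ Set.Icc (0:ℝ) 1, σL ≤ σ x) (hσu : ∀ x ∈ Set.Icc (0:ℝ) 1, σ x ≤ σU)
    (hcm : Measurable c)
    (hc : ∀ x ∈ Set.Icc (0:ℝ) 1, |c x| ≤ K₀) :
    IntegrableOn (Ff σ c) (Set.Icc (0:ℝ) 1) := by
  apply bdd_meas_int (Ff_aesm hσL hσm hσl hcm hc)
    (cst := 2 * Real.exp (3 * (2 * K₀ / σL ^ 2)) / σL ^ 2)
  intro y hy
  have hlo := F_lo hσL hσm hσl hσu hcm hc hy
  have hσU : (0:ℝ) < σU := hσL.trans_le ((hσl y hy).trans (hσu y hy))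
  rw [abs_of_nonneg (le_trans (by positivity) hlo)]
  exact F_hi hσL hσm hσl hcm hc hy

lemma Hb_lo (hσL : 0 < σL) (hσm : Measurable σ)
    (hσl : ∀ x ∈ Set.Icc (0:ℝ) 1, σL ≤ σ x) (hσu : ∀ x ∈ Set.Icc (0:ℝ) 1, σ x ≤ σU)
    (hcm : Measurable c)
    (hc : ∀ x ∈ Set.Icc (0:ℝ) 1, |c x| ≤ K₀) :
    Real.exp (-(3 * (2 * K₀ / σL ^ 2))) / σU ^ 2 ≤ Hb σ c := by
  rw [Hb_eq]
  have h := intervalIntegral.integral_mono_on (μ := volume) zero_le_one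
    intervalIntegrable_const
    (icc_ii (Ff_int hσL hσm hσl hσu hcm hc) (by norm_num) (by norm_num))
    (fun y hy => F_lo hσL hσm hσl hσu hcm hc hy)
  simpa using h

lemma Hb_hi (hσL : 0 < σL) (hσm : Measurable σ)
    (hσl : ∀ x ∈ Set.Icc (0:ℝ) 1, σL ≤ σ x) (hσu : ∀ x ∈ Set.Icc (0:ℝ) 1, σ x ≤ σU)
    (hcm : Measurable c)
    (hc : ∀ x ∈ Set.Icc (0:ℝ) 1, |c x| ≤ K₀) :
    Hb σ c ≤ 2 * Real.exp (3 * (2 * K₀ / σL ^ 2)) / σL ^ 2 := by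
  rw [Hb_eq]
  have h := intervalIntegral.integral_mono_on (μ := volume) zero_le_one
    (icc_ii (Ff_int hσL hσm hσl hσu hcm hc) (by norm_num) (by norm_num))
    intervalIntegrable_const
    (fun y hy => F_hi hσL hσm hσl hcm hc hy)
  simpa using h

lemma Hb_diff (hσL : 0 < σL) (hσm : Measurable σ)
    (hσl : ∀ x ∈ Set.Icc (0:ℝ) 1, σL ≤ σ x) (hσu : ∀ x ∈ Set.Icc (0:ℝ) 1, σ x ≤ σU)
    (hbm : Measurable b) (hb₀m : Measurable b₀)
    (hb : ∀ x ∈ Set.Icc (0:ℝ) 1, |b x| ≤ K₀) (hb₀ : ∀ x ∈ Set.Icc (0:ℝ) 1, |b₀ x| ≤ K₀) :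
    |Hb σ b - Hb σ b₀|
      ≤ (5 * Real.exp (3 * (2 * K₀ / σL ^ 2)) / σL ^ 2)
        * ((2 / σL ^ 2) * ∫ y in (0:ℝ)..1, |b y - b₀ y|) := by
  have hE : (0:ℝ) ≤ ∫ y in (0:ℝ)..1, |b y - b₀ y| :=
    intervalIntegral.integral_nonneg zero_le_one (fun y _ => abs_nonneg _)
  have hK : (0:ℝ) ≤ K₀ := K_nonneg hb
  rw [Hb_eq, Hb_eq, ← intervalIntegral.integral_sub
    (icc_ii (Ff_int hσL hσm hσl hσu hbm hb) (by norm_num) (by norm_num))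
    (icc_ii (Ff_int hσL hσm hσl hσu hb₀m hb₀) (by norm_num) (by norm_num))]
  have h := intervalIntegral.norm_integral_le_of_norm_le_const
    (a := (0:ℝ)) (b := (1:ℝ))
    (C := (5 * Real.exp (3 * (2 * K₀ / σL ^ 2)) / σL ^ 2)
        * ((2 / σL ^ 2) * ∫ y in (0:ℝ)..1, |b y - b₀ y|))
    (f := fun x => Ff σ b x - Ff σ b₀ x)
    (by intro y hy
        rw [Set.uIoc_of_le zero_le_one] at hy
        exact F_diff hσL hσm hσl hbm hb₀m hb hb₀ ⟨hy.1.le, hy.2⟩)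
  simpa using h

end

theorem statement9 (K₀ σL σU : ℝ) (hK₀ : 0 < K₀) (hσL : 0 < σL) (hσLU : σL ≤ σU) :
    ∃ C > (0:ℝ), ∀ σ : ℝ → ℝ, Measurable σ →
      (∀ x ∈ Set.Icc (0:ℝ) 1, σL ≤ σ x) →
      (∀ x ∈ Set.Icc (0:ℝ) 1, σ x ≤ σU) →
      ∀ b b₀ : ℝ → ℝ, Measurable b → Measurable b₀ →
      (∀ x ∈ Set.Icc (0:ℝ) 1, |b x| ≤ K₀) →
      (∀ x ∈ Set.Icc (0:ℝ) 1, |b₀ x| ≤ K₀) →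
      (∀ x ∈ Set.Icc (0:ℝ) 1,
        |πb σ b x - πb σ b₀ x| ≤ C * L2norm (fun y => b y - b₀ y)) ∧
      L2norm (fun x => πb σ b x - πb σ b₀ x) ≤ C * L2norm (fun y => b y - b₀ y) := by
  have hσU : (0:ℝ) < σU := hσL.trans_le hσLU
  set M := 2 * K₀ / σL ^ 2 with hMdef
  set Flo := Real.exp (-(3 * M)) / σU ^ 2 with hFlodef
  set Fhi := 2 * Real.exp (3 * M) / σL ^ 2 with hFhidef
  set KF := 5 * Real.exp (3 * M) / σL ^ 2 with hKFdef
  have hFlopos : 0 < Flo := by rw [hFlodef]; positivity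
  have hFhipos : 0 < Fhi := by rw [hFhidef]; positivity
  have hKFpos : 0 < KF := by rw [hKFdef]; positivity
  set C := 2 * Fhi * (KF * (2 / σL ^ 2)) / Flo ^ 2 with hCdef
  have hCpos : 0 < C := by rw [hCdef]; positivity
  refine ⟨C, hCpos, ?_⟩
  intro σ hσm hσl hσu b b₀ hbm hb₀m hb hb₀
  have h0 : (0:ℝ) ∈ Set.Icc (0:ℝ) 1 := by norm_num
  have h1 : (1:ℝ) ∈ Set.Icc (0:ℝ) 1 := by norm_num
  set E := ∫ y in (0:ℝ)..1, |b y - b₀ y| with hEdef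
  have hE : (0:ℝ) ≤ E :=
    intervalIntegral.integral_nonneg zero_le_one (fun y _ => abs_nonneg _)
  set D := L2norm (fun y => b y - b₀ y) with hDdef
  have hgint : IntegrableOn (fun y => b y - b₀ y) (Set.Icc (0:ℝ) 1) :=
    gdiff_int hbm hb₀m hb hb₀
  have hgsqint : IntegrableOn (fun y => (b y - b₀ y) ^ 2) (Set.Icc (0:ℝ) 1) := by
    apply bdd_meas_int ((hbm.sub hb₀m).pow_const 2).aestronglyMeasurable.restrict
      (cst := (2 * K₀) ^ 2)
    intro y hy
    have hby : |b y - b₀ y| ≤ 2 * K₀ := by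
      calc |b y - b₀ y| ≤ |b y| + |b₀ y| := abs_sub _ _
        _ ≤ 2 * K₀ := by linarith [hb y hy, hb₀ y hy]
    rw [abs_of_nonneg (sq_nonneg _), ← sq_abs]
    exact pow_le_pow_left₀ (abs_nonneg _) hby 2
  have hED : E ≤ D := by
    rw [hDdef, L2norm]
    exact cs_lite ((icc_ii hgint h0 h1).abs) (icc_ii hgsqint h0 h1)
  have hDnn : (0:ℝ) ≤ D := Real.sqrt_nonneg _
  -- bounds on normalising constants
  have hHlo_b : Flo ≤ Hb σ b := Hb_lo hσL hσm hσl hσu hbm hb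
  have hHlo_0 : Flo ≤ Hb σ b₀ := Hb_lo hσL hσm hσl hσu hb₀m hb₀
  have hHhi_0 : Hb σ b₀ ≤ Fhi := Hb_hi hσL hσm hσl hσu hb₀m hb₀
  have hHbpos : 0 < Hb σ b := hFlopos.trans_le hHlo_b
  have hH0pos : 0 < Hb σ b₀ := hFlopos.trans_le hHlo_0
  -- the pointwise bound (in terms of E)
  have hptE : ∀ x ∈ Set.Icc (0:ℝ) 1, |πb σ b x - πb σ b₀ x| ≤ C * E := by
    intro x hx
    rw [pi_eq, pi_eq]
    have hFd : |Ff σ b x - Ff σ b₀ x| ≤ KF * ((2 / σL ^ 2) * E) :=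
      F_diff hσL hσm hσl hbm hb₀m hb hb₀ hx
    have hHd : |Hb σ b₀ - Hb σ b| ≤ KF * ((2 / σL ^ 2) * E) := by
      rw [abs_sub_comm]
      exact Hb_diff hσL hσm hσl hσu hbm hb₀m hb hb₀
    have hF0lo : Flo ≤ Ff σ b₀ x := F_lo hσL hσm hσl hσu hb₀m hb₀ hx
    have hF0hi : Ff σ b₀ x ≤ Fhi := F_hi hσL hσm hσl hb₀m hb₀ hx
    have hKFE : (0:ℝ) ≤ KF * ((2 / σL ^ 2) * E) := by positivity
    have heq : Ff σ b x / Hb σ b - Ff σ b₀ x / Hb σ b₀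
        = ((Ff σ b x - Ff σ b₀ x) * Hb σ b₀
            + Ff σ b₀ x * (Hb σ b₀ - Hb σ b)) / (Hb σ b * Hb σ b₀) := by
      field_simp
      ring
    rw [heq, abs_div, abs_of_pos (mul_pos hHbpos hH0pos)]
    have t1 : |(Ff σ b x - Ff σ b₀ x) * Hb σ b₀| ≤ (KF * ((2 / σL ^ 2) * E)) * Fhi := by
      rw [abs_mul, abs_of_pos hH0pos]
      exact mul_le_mul hFd hHhi_0 hH0pos.le hKFE
    have t2 : |Ff σ b₀ x * (Hb σ b₀ - Hb σ b)| ≤ Fhi * (KF * ((2 / σL ^ 2) * E)) := by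
      rw [abs_mul, abs_of_pos (hFlopos.trans_le hF0lo)]
      exact mul_le_mul hF0hi hHd (abs_nonneg _) hFhipos.le
    have hnum : |(Ff σ b x - Ff σ b₀ x) * Hb σ b₀ + Ff σ b₀ x * (Hb σ b₀ - Hb σ b)|
        ≤ 2 * Fhi * (KF * ((2 / σL ^ 2) * E)) := by
      calc _ ≤ |(Ff σ b x - Ff σ b₀ x) * Hb σ b₀|
            + |Ff σ b₀ x * (Hb σ b₀ - Hb σ b)| := abs_add_le _ _
        _ ≤ _ := by linarith
    have hden : Flo ^ 2 ≤ Hb σ b * Hb σ b₀ := by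
      rw [sq]
      exact mul_le_mul hHlo_b hHlo_0 hFlopos.le hHbpos.le
    calc |(Ff σ b x - Ff σ b₀ x) * Hb σ b₀ + Ff σ b₀ x * (Hb σ b₀ - Hb σ b)|
          / (Hb σ b * Hb σ b₀)
        ≤ (2 * Fhi * (KF * ((2 / σL ^ 2) * E))) / Flo ^ 2 :=
          div_le_div₀ (by positivity) hnum (by positivity) hden
      _ = C * E := by rw [hCdef]; ring
  have hpt : ∀ x ∈ Set.Icc (0:ℝ) 1, |πb σ b x - πb σ b₀ x| ≤ C * D := by
    intro x hx
    exact (hptE x hx).trans (mul_le_mul_of_nonneg_left hED hCpos.le)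
  refine ⟨hpt, ?_⟩
  -- L² bound
  have hπaesm : AEStronglyMeasurable (fun x => πb σ b x - πb σ b₀ x)
      (volume.restrict (Set.Icc (0:ℝ) 1)) := by
    have hfe : (fun x => πb σ b x - πb σ b₀ x)
        = fun x => Ff σ b x * (Hb σ b)⁻¹ - Ff σ b₀ x * (Hb σ b₀)⁻¹ := by
      funext x; rw [pi_eq, pi_eq, div_eq_mul_inv, div_eq_mul_inv]
    rw [hfe]
    exact ((Ff_aesm hσL hσm hσl hbm hb).mul aestronglyMeasurable_const).sub
      ((Ff_aesm hσL hσm hσl hb₀m hb₀).mul aestronglyMeasurable_const)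
  have hsqint : IntegrableOn (fun x => (πb σ b x - πb σ b₀ x) ^ 2)
      (Set.Icc (0:ℝ) 1) := by
    apply bdd_meas_int (by simpa [pow_two, Pi.mul_def] using hπaesm.mul hπaesm)
      (cst := (C * D) ^ 2)
    intro y hy
    rw [abs_of_nonneg (sq_nonneg _), ← sq_abs]
    exact pow_le_pow_left₀ (abs_nonneg _) (hpt y hy) 2
  have hint_le : (∫ x in (0:ℝ)..1, (πb σ b x - πb σ b₀ x) ^ 2) ≤ (C * D) ^ 2 := by
    have h := intervalIntegral.integral_mono_on (μ := volume) zero_le_one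
      (icc_ii hsqint h0 h1) intervalIntegrable_const
      (fun y hy => by
        rw [← sq_abs]
        exact pow_le_pow_left₀ (abs_nonneg _) (hpt y hy) 2)
    simpa using h
  rw [L2norm]
  calc Real.sqrt (∫ x in (0:ℝ)..1, (πb σ b x - πb σ b₀ x) ^ 2)
      ≤ Real.sqrt ((C * D) ^ 2) := Real.sqrt_le_sqrt hint_le
    _ = C * D := Real.sqrt_sq (by positivity)
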